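/- Let G be a finite bipartite graph and I ⊆ V(G) an independent set (no edge has both endpoints in I). Then Σ_{v ∈ I} E_G(v) ≤ (1/2) E(G). -/

import Mathlib

open Matrix BigOperators Finset Polynomial

noncomputable def adjMat {V : Type*} [Fintype V] (G : SimpleGraph V) : Matrix V V ℝ :=
  letI := Classical.decRel G.Adj; G.adjMatrix ℝ

noncomputable def absMat {V : Type*} [Fintype V] [DecidableEq V] (A : Matrix V V ℝ) :
    Matrix V V ℝ :=
  (Matrix.posSemidef_self_mul_conjTranspose A).1.eigenvectorUnitary.1 *
    Matrix.diagonal (Real.sqrt ∘ (Matrix.posSemidef_self_mul_conjTranspose A).1.eigenvalues) *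
    (star (Matrix.posSemidef_self_mul_conjTranspose A).1.eigenvectorUnitary : Matrix V V ℝ)

/-- The energy of a vertex: the (i,i) entry of |A| = (A Aᴴ)^{1/2}. -/
noncomputable def vertexEnergy {V : Type*} [Fintype V] [DecidableEq V]
    (G : SimpleGraph V) (i : V) : ℝ :=
  absMat (adjMat G) i i

/-- The energy of a graph: the trace of |A| (equivalently the sum of vertex energies). -/
noncomputable def graphEnergy {V : Type*} [Fintype V] [DecidableEq V]
    (G : SimpleGraph V) : ℝ :=
  Matrix.trace (absMat (adjMat G))

open Matrix BigOperators Finset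

namespace EnergyAux

variable {V : Type*} [Fintype V] [DecidableEq V]

noncomputable def matFun {B : Matrix V V ℝ} (hB : B.IsHermitian) (f : ℝ → ℝ) : Matrix V V ℝ :=
  (hB.eigenvectorUnitary : Matrix V V ℝ) * Matrix.diagonal (f ∘ hB.eigenvalues) *
    star (hB.eigenvectorUnitary : Matrix V V ℝ)

variable {B : Matrix V V ℝ} (hB : B.IsHermitian)

lemma star_mul_self_S : star (hB.eigenvectorUnitary : Matrix V V ℝ) *
    (hB.eigenvectorUnitary : Matrix V V ℝ) = 1 :=
  (Matrix.mem_unitaryGroup_iff'.mp hB.eigenvectorUnitary.2)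

lemma self_mul_star_S : (hB.eigenvectorUnitary : Matrix V V ℝ) *
    star (hB.eigenvectorUnitary : Matrix V V ℝ) = 1 :=
  (Matrix.mem_unitaryGroup_iff.mp hB.eigenvectorUnitary.2)

lemma matFun_mul (f g : ℝ → ℝ) :
    matFun hB f * matFun hB g = matFun hB (fun t => f t * g t) := by
  unfold matFun
  simp only [← Matrix.mul_assoc]
  rw [Matrix.mul_assoc ((hB.eigenvectorUnitary : Matrix V V ℝ) * _), star_mul_self_S hB,
    Matrix.mul_one, Matrix.mul_assoc (hB.eigenvectorUnitary : Matrix V V ℝ),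
    Matrix.diagonal_mul_diagonal]
  rfl

lemma matFun_id : matFun hB (fun t => t) = B := by
  have h := hB.spectral_theorem
  rw [Unitary.conjStarAlgAut_apply, RCLike.ofReal_real_eq_id] at h
  unfold matFun
  exact h.symm

lemma matFun_trace (f : ℝ → ℝ) :
    Matrix.trace (matFun hB f) = ∑ i, f (hB.eigenvalues i) := by
  unfold matFun
  rw [Matrix.trace_mul_cycle, star_mul_self_S hB, Matrix.one_mul, Matrix.trace_diagonal]
  rfl

def IsContr (C : Matrix V V ℝ) : Prop :=
  ∀ x : V → ℝ, |x ⬝ᵥ C *ᵥ x| ≤ x ⬝ᵥ x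

lemma matFun_contr {f : ℝ → ℝ} (hf : ∀ t, |f t| ≤ 1) : IsContr (matFun hB f) := by
  intro x
  set S := (hB.eigenvectorUnitary : Matrix V V ℝ) with hS
  set y : V → ℝ := star S *ᵥ x with hy
  have hxy : x ᵥ* S = y := by
    ext i
    simp [hy, Matrix.vecMul, Matrix.mulVec, dotProduct, Matrix.star_apply, mul_comm]
  have hyy : y ⬝ᵥ y = x ⬝ᵥ x := by
    calc y ⬝ᵥ y = (x ᵥ* S) ⬝ᵥ (star S *ᵥ x) := by rw [hxy]
      _ = x ⬝ᵥ (S *ᵥ (star S *ᵥ x)) := (Matrix.dotProduct_mulVec _ _ _).symm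
      _ = x ⬝ᵥ x := by rw [Matrix.mulVec_mulVec, self_mul_star_S hB, Matrix.one_mulVec]
  have hq : x ⬝ᵥ (matFun hB f) *ᵥ x = ∑ i, f (hB.eigenvalues i) * (y i * y i) := by
    unfold matFun
    rw [← Matrix.mulVec_mulVec, ← Matrix.mulVec_mulVec, ← hy, ← hS,
      Matrix.dotProduct_mulVec x S, hxy]
    simp only [dotProduct, Matrix.mulVec_diagonal, Function.comp]
    exact Finset.sum_congr rfl fun i _ => by ring
  rw [hq]
  calc |∑ i, f (hB.eigenvalues i) * (y i * y i)|
      ≤ ∑ i, |f (hB.eigenvalues i) * (y i * y i)| := Finset.abs_sum_le_sum_abs _ _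
    _ ≤ ∑ i, y i * y i := by
        refine Finset.sum_le_sum fun i _ => ?_
        rw [abs_mul]
        calc |f (hB.eigenvalues i)| * |y i * y i| ≤ 1 * |y i * y i| := by
              exact mul_le_mul_of_nonneg_right (hf _) (abs_nonneg _)
          _ = y i * y i := by rw [one_mul, abs_mul_self]
    _ = y ⬝ᵥ y := rfl
    _ = x ⬝ᵥ x := hyy

/-- von Neumann-type trace inequality -/
lemma trace_mul_le {C : Matrix V V ℝ} (hC : IsContr C) :
    Matrix.trace (C * B) ≤ ∑ i, |hB.eigenvalues i| := by
  set S := (hB.eigenvectorUnitary : Matrix V V ℝ) with hS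
  have hrw : Matrix.trace (C * B) =
      ∑ i, (star S * C * S) i i * hB.eigenvalues i := by
    conv_lhs => rw [← matFun_id hB]
    unfold matFun
    rw [← hS, ← Matrix.mul_assoc, ← Matrix.mul_assoc, Matrix.trace_mul_cycle]
    rw [Matrix.trace]
    refine Finset.sum_congr rfl fun i _ => ?_
    rw [Matrix.diag_apply, Matrix.mul_diagonal, ← Matrix.mul_assoc]
    rfl
  rw [hrw]
  refine Finset.sum_le_sum fun i _ => ?_
  have hentry : (star S * C * S) i i = (fun v => S v i) ⬝ᵥ C *ᵥ (fun v => S v i) := by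
    simp only [Matrix.mul_apply, dotProduct, Matrix.mulVec, Matrix.star_apply,
      star_trivial, Finset.sum_mul, Finset.mul_sum]
    rw [Finset.sum_comm]
    exact Finset.sum_congr rfl fun u _ => Finset.sum_congr rfl fun v _ => by ring
  have hunit : ((fun v => S v i) : V → ℝ) ⬝ᵥ (fun v => S v i) = 1 := by
    have := congrFun (congrFun (star_mul_self_S hB) i) i
    simpa [hS, Matrix.mul_apply, dotProduct, Matrix.star_apply, Matrix.one_apply] using this
  have h1 : |(star S * C * S) i i| ≤ 1 := by
    rw [hentry]
    calc |_| ≤ _ := hC _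
      _ = 1 := hunit
  calc (star S * C * S) i i * hB.eigenvalues i
      ≤ |(star S * C * S) i i * hB.eigenvalues i| := le_abs_self _
    _ = |(star S * C * S) i i| * |hB.eigenvalues i| := abs_mul _ _
    _ ≤ 1 * |hB.eigenvalues i| := mul_le_mul_of_nonneg_right h1 (abs_nonneg _)
    _ = |hB.eigenvalues i| := one_mul _

lemma abs_sign_le (t : ℝ) : |Real.sign t| ≤ 1 := by
  rcases Real.sign_apply_eq t with h | h | h <;> rw [h] <;> norm_num

lemma rsign_mul_self (t : ℝ) : Real.sign t * t = |t| := by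
  rcases lt_trichotomy t 0 with h | h | h
  · rw [Real.sign_of_neg h, abs_of_neg h]; ring
  · simp [h]
  · rw [Real.sign_of_pos h, abs_of_pos h]; ring

end EnergyAux

namespace EnergyAux

variable {V : Type*} [Fintype V] [DecidableEq V]

lemma matFun_posSemidef {B : Matrix V V ℝ} (hB : B.IsHermitian) {f : ℝ → ℝ}
    (hf : ∀ t, 0 ≤ f t) : (matFun hB f).PosSemidef := by
  have h := (Matrix.posSemidef_diagonal_iff.mpr
      (fun i => hf (hB.eigenvalues i))).mul_mul_conjTranspose_same
      (hB.eigenvectorUnitary : Matrix V V ℝ)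
  simpa [matFun, Matrix.star_eq_conjTranspose, Function.comp_def] using h

lemma absMat_eq {A : Matrix V V ℝ} (hA : A.IsHermitian) :
    absMat A = matFun hA (fun t => |t|) := by
  have hAA := (Matrix.posSemidef_self_mul_conjTranspose A).1
  have hsa : IsSelfAdjoint A := hA
  have e1 : absMat A = cfc Real.sqrt (A * Aᴴ) := by
    rw [hAA.cfc_eq]; simp [absMat, Matrix.IsHermitian.cfc, RCLike.ofReal_real_eq_id]
  have e2 : matFun hA (fun t => |t|) = cfc (fun t : ℝ => |t|) A := by
    rw [hA.cfc_eq]; simp [matFun, Matrix.IsHermitian.cfc, RCLike.ofReal_real_eq_id]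
  rw [e1, e2, hA.eq, show A * A = cfc (fun t : ℝ => t * t) A by
    rw [cfc_mul (fun t : ℝ => t) (fun t : ℝ => t) A, cfc_id' ℝ A],
    ← cfc_comp' Real.sqrt (fun t : ℝ => t * t) A]
  congr 1; funext t; exact Real.sqrt_mul_self_eq_abs t

lemma adjMat_zero {G : SimpleGraph V} {u v : V} (h : ¬ G.Adj u v) : adjMat G u v = 0 := by
  unfold adjMat
  simp [h]

lemma adjMat_herm (G : SimpleGraph V) : (adjMat G).IsHermitian := by
  show _ᴴ = _
  ext u v
  rw [Matrix.conjTranspose_apply, star_trivial]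
  unfold adjMat
  by_cases h : G.Adj u v
  · simp [h, h.symm]
  · have h' : ¬ G.Adj v u := fun hh => h hh.symm
    simp [h, h']

end EnergyAux


open EnergyAux in
/-- for a bipartite graph G and an independent set I,
Σ_{v ∈ I} E_G(v) ≤ (1/2)·E(G). -/
theorem independent_set_energy_inequality {V : Type*} [Fintype V] [DecidableEq V]
    (G : SimpleGraph V) (hG : G.Colorable 2) (I : Finset V)
    (hI : ∀ a ∈ I, ∀ b ∈ I, ¬ G.Adj a b) :
    ∑ v ∈ I, vertexEnergy G v ≤ (1 / 2) * graphEnergy G := by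
  have hsgnabs : (fun t : ℝ => Real.sign t * t) = fun t : ℝ => |t| :=
    funext fun t => rsign_mul_self t
  have hsgnabs' : (fun t : ℝ => t * Real.sign t) = fun t : ℝ => |t| :=
    funext fun t => by rw [mul_comm]; exact rsign_mul_self t
  set A := adjMat G with hAdef
  have hA : A.IsHermitian := adjMat_herm G
  set ind : V → ℝ := fun v => if v ∈ I then 1 else 0 with hind
  set dd : V → ℝ := fun v => if v ∈ I then -1 else 1 with hdd
  set P : Matrix V V ℝ := Matrix.diagonal ind with hP
  set D : Matrix V V ℝ := Matrix.diagonal dd with hD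
  set M : Matrix V V ℝ := P * A + A * P with hMdef
  have hPherm : Pᴴ = P := by
    rw [hP, Matrix.diagonal_conjTranspose]
    congr 1
  have hM : M.IsHermitian := by
    show Mᴴ = M
    rw [hMdef, Matrix.conjTranspose_add, Matrix.conjTranspose_mul, Matrix.conjTranspose_mul,
      hA.eq, hPherm, add_comm]
  -- the pinching identity, using independence of I
  have hMD : M = (1/2 : ℝ) • (A - D * A * D) := by
    ext u v
    simp only [hMdef, hP, hD, Matrix.add_apply, Matrix.smul_apply, Matrix.sub_apply,
      Matrix.mul_diagonal, Matrix.diagonal_mul, smul_eq_mul]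
    by_cases hu : u ∈ I <;> by_cases hv : v ∈ I
    · have h0 : A u v = 0 := adjMat_zero (hI u hu v hv)
      simp [hind, hdd, hu, hv, h0]
    · simp only [hind, hdd, if_pos hu, if_neg hv]; ring
    · simp only [hind, hdd, if_pos hv, if_neg hu]; ring
    · simp only [hind, hdd, if_neg hu, if_neg hv]; ring
  set Ab : Matrix V V ℝ := absMat A with hAbdef
  have hAb : Ab = matFun hA (fun t => |t|) := absMat_eq hA
  set Us : Matrix V V ℝ := matFun hA Real.sign with hUs
  set W : Matrix V V ℝ := matFun hM Real.sign with hW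
  have hUA : Us * A = Ab := by
    rw [hUs, hAb]
    calc matFun hA Real.sign * A
        = matFun hA Real.sign * matFun hA (fun t => t) := by rw [matFun_id]
      _ = matFun hA (fun t => Real.sign t * t) := matFun_mul hA _ _
      _ = matFun hA (fun t => |t|) := by rw [hsgnabs]
  have hAU : A * Us = Ab := by
    rw [hUs, hAb]
    calc A * matFun hA Real.sign
        = matFun hA (fun t => t) * matFun hA Real.sign := by rw [matFun_id]
      _ = matFun hA (fun t => t * Real.sign t) := matFun_mul hA _ _
      _ = matFun hA (fun t => |t|) := by rw [hsgnabs']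
  -- sum over I as a trace
  have hsum : ∑ v ∈ I, vertexEnergy G v = Matrix.trace (P * Ab) := by
    have h1 : Matrix.trace (P * Ab) = ∑ v, (if v ∈ I then Ab v v else 0) := by
      rw [Matrix.trace]
      refine Finset.sum_congr rfl fun v _ => ?_
      rw [Matrix.diag_apply, hP, Matrix.diagonal_mul]
      by_cases h : v ∈ I <;> simp [hind, h]
    rw [h1, Finset.sum_ite_mem, Finset.univ_inter]
    rfl
  -- step 2
  have step2 : Matrix.trace (Us * M) = 2 * Matrix.trace (P * Ab) := by
    rw [hMdef, Matrix.mul_add, Matrix.trace_add]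
    have t1 : Matrix.trace (Us * (P * A)) = Matrix.trace (P * Ab) := by
      rw [Matrix.trace_mul_comm, Matrix.mul_assoc, hAU]
    have t2 : Matrix.trace (Us * (A * P)) = Matrix.trace (P * Ab) := by
      rw [← Matrix.mul_assoc, hUA, Matrix.trace_mul_comm]
    rw [t1, t2]; ring
  -- step 3
  have step3 : Matrix.trace (Us * M) ≤ ∑ j, |hM.eigenvalues j| :=
    trace_mul_le hM (matFun_contr hA abs_sign_le)
  -- step 4
  have step4 : (∑ j, |hM.eigenvalues j|) = Matrix.trace (W * M) := by
    rw [hW]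
    have : matFun hM Real.sign * M = matFun hM (fun t => Real.sign t * t) := by
      calc matFun hM Real.sign * M
          = matFun hM Real.sign * matFun hM (fun t => t) := by rw [matFun_id]
        _ = matFun hM (fun t => Real.sign t * t) := matFun_mul hM _ _
    rw [this, hsgnabs, matFun_trace]
  -- step 5
  set C : Matrix V V ℝ := (1/2 : ℝ) • (W - D * W * D) with hC
  have step5 : Matrix.trace (W * M) = Matrix.trace (C * A) := by
    have key : Matrix.trace (W * (D * A * D)) = Matrix.trace (D * W * D * A) := by
      rw [← Matrix.mul_assoc, Matrix.trace_mul_comm, ← Matrix.mul_assoc, ← Matrix.mul_assoc]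
    rw [hMD, Matrix.mul_smul, Matrix.trace_smul, Matrix.mul_sub, Matrix.trace_sub, key,
      hC, Matrix.smul_mul, Matrix.trace_smul, Matrix.sub_mul, Matrix.trace_sub]
  -- contraction property of C
  have contrC : IsContr C := by
    intro x
    have hWc := matFun_contr hM abs_sign_le
    have hq : x ⬝ᵥ C *ᵥ x =
        (1/2 : ℝ) * (x ⬝ᵥ W *ᵥ x - (D *ᵥ x) ⬝ᵥ W *ᵥ (D *ᵥ x)) := by
      rw [hC, Matrix.smul_mulVec, Matrix.sub_mulVec, dotProduct_smul,
        dotProduct_sub, smul_eq_mul]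
      congr 2
      rw [← Matrix.mulVec_mulVec, ← Matrix.mulVec_mulVec]
      have hDdot : ∀ z : V → ℝ, x ⬝ᵥ D *ᵥ z = (D *ᵥ x) ⬝ᵥ z := by
        intro z
        simp only [dotProduct, hD, Matrix.mulVec_diagonal]
        exact Finset.sum_congr rfl fun u _ => by ring
      rw [hDdot]
    have hDD : (D *ᵥ x) ⬝ᵥ (D *ᵥ x) = x ⬝ᵥ x := by
      simp only [dotProduct, hD, Matrix.mulVec_diagonal]
      refine Finset.sum_congr rfl fun u _ => ?_
      have h1 : dd u * dd u = 1 := by by_cases h : u ∈ I <;> simp [hdd, h]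
      calc dd u * x u * (dd u * x u) = (dd u * dd u) * (x u * x u) := by ring
        _ = x u * x u := by rw [h1, one_mul]
    have h1 := hWc x
    have h2 := hWc (D *ᵥ x)
    rw [hDD] at h2
    rw [hq, abs_le]
    rw [abs_le] at h1 h2
    constructor <;> linarith [h1.1, h1.2, h2.1, h2.2]
  -- step 6
  have step6 : Matrix.trace (C * A) ≤ ∑ i, |hA.eigenvalues i| := trace_mul_le hA contrC
  -- energy identity
  have energy : graphEnergy G = ∑ i, |hA.eigenvalues i| := by
    show Matrix.trace (absMat (adjMat G)) = _
    rw [← hAdef, ← hAbdef, hAb, matFun_trace]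
  linarith
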